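/- Let α : V × V → Λ be a symmetric bilinear map satisfying ⟨α(X,Y),w⟩ = −(X,Y) for all X,Y ∈ V, with associated bilinear map β flat, and suppose S(β) is degenerate with v ∈ U₀ a light-like vector such that S(β) ∩ S(β)^⊥ = span{(v,0),(0,v)}. Then v and w are linearly independent and L = span{v,w} ⊂ Λ is a Lorentzian plane, i.e. the restriction of ⟨·,·⟩ to L is a nondegenerate form of signature (1,1); in particular ⟨v,w⟩ ≠ 0. -/

import Mathlib

open Module

noncomputable def truncAux (p : ℕ) [NeZero p] (s : Fin p → ℝ) : EuclideanSpace ℝ (Fin p) :=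
  WithLp.toLp 2 (fun i => if i = 0 then 0 else s i)

lemma truncAux_inner (p : ℕ) [NeZero p] (s t : Fin p → ℝ) :
    (inner ℝ (truncAux p s) (truncAux p t) : ℝ) = ∑ i, if i = 0 then 0 else s i * t i := by
  rw [PiLp.inner_apply]
  refine Finset.sum_congr rfl fun i _ => ?_
  simp only [RCLike.inner_apply, conj_trivial, truncAux, PiLp.toLp_apply]
  split <;> ring

lemma sum_split_aux (p : ℕ) [NeZero p] (t : Fin p → ℝ) :
    ∑ i, (if i = 0 then (-1:ℝ) else 1) * t i = (∑ i, if i = 0 then 0 else t i) - t 0 := by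
  have h : ∀ i : Fin p, (if i = 0 then (-1:ℝ) else 1) * t i
      = (if i = 0 then 0 else t i) - (if i = 0 then t i else 0) := by
    intro i; split <;> ring
  simp only [h, Finset.sum_sub_distrib, Finset.sum_ite_eq', Finset.mem_univ, if_true]

/-- In a Lorentzian space, two nonzero null vectors that are orthogonal are proportional. -/
lemma null_orth_dep (p : ℕ) [NeZero p]
    {Λ : Type} [AddCommGroup Λ] [Module ℝ Λ]
    (ip : LinearMap.BilinForm ℝ Λ)
    (e : Basis (Fin p) ℝ Λ)
    (he : ∀ i j, ip (e i) (e j) =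
      if i = j then (if (i : ℕ) = 0 then (-1 : ℝ) else 1) else 0)
    (v w : Λ) (hv0 : v ≠ 0) (hw0 : w ≠ 0)
    (hvv : ip v v = 0) (hww : ip w w = 0) (hvw : ip v w = 0) :
    ∃ r : ℝ, r ≠ 0 ∧ w = r • v := by
  classical
  have hi0 : ∀ i : Fin p, ((i:ℕ) = 0) ↔ (i = 0) := by
    intro i
    constructor
    · intro h; exact Fin.ext (by simp [h])
    · intro h; simp [h]
  have hcoord : ∀ a b : Λ, ip a b =
      ∑ i : Fin p, (if i = 0 then (-1:ℝ) else 1) * (e.repr a i * e.repr b i) := by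
    intro a b
    conv_lhs => rw [← e.sum_repr a, ← e.sum_repr b]
    simp only [map_sum, LinearMap.sum_apply, map_smul, LinearMap.smul_apply, he, smul_eq_mul,
      mul_ite, mul_zero, Finset.sum_ite_eq', Finset.mem_univ, if_true, hi0]
    refine Finset.sum_congr rfl fun i _ => ?_
    split <;> ring
  have hipeq : ∀ a b : Λ,
      ip a b = (inner ℝ (truncAux p (e.repr a)) (truncAux p (e.repr b)) : ℝ)
        - e.repr a 0 * e.repr b 0 := by
    intro a b
    rw [hcoord, truncAux_inner, sum_split_aux]
  -- basic facts for null nonzero vectors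
  have hbase : ∀ u : Λ, u ≠ 0 → ip u u = 0 →
      truncAux p (e.repr u) ≠ 0 ∧ e.repr u 0 ≠ 0 := by
    intro u hu huu
    have hq : (inner ℝ (truncAux p (e.repr u)) (truncAux p (e.repr u)) : ℝ)
        = e.repr u 0 * e.repr u 0 := by
      have := hipeq u u; rw [huu] at this; linarith
    have hzero : e.repr u 0 = 0 → False := by
      intro h00
      have htr : truncAux p (e.repr u) = 0 := by
        rw [← @inner_self_eq_zero ℝ]
        rw [hq, h00, mul_zero]
      apply hu
      apply e.repr.map_eq_zero_iff.mp
      ext i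
      by_cases hi : i = 0
      · simp [hi, h00]
      · have := congrArg (fun z => z i) htr
        simpa [truncAux, hi] using this
    constructor
    · intro htr
      apply hzero
      have : (inner ℝ (truncAux p (e.repr u)) (truncAux p (e.repr u)) : ℝ) = 0 := by
        rw [htr]; simp
      rw [hq] at this
      exact mul_self_eq_zero.mp this
    · exact hzero
  obtain ⟨hx0, hv00⟩ := hbase v hv0 hvv
  obtain ⟨hy0, hw00⟩ := hbase w hw0 hww
  set x := truncAux p (e.repr v) with hxdef
  set y := truncAux p (e.repr w) with hydef
  have hxx : (inner ℝ x x : ℝ) = e.repr v 0 * e.repr v 0 := by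
    have := hipeq v v; rw [hvv] at this; linarith
  have hyy : (inner ℝ y y : ℝ) = e.repr w 0 * e.repr w 0 := by
    have := hipeq w w; rw [hww] at this; linarith
  have hxy : (inner ℝ x y : ℝ) = e.repr v 0 * e.repr w 0 := by
    have := hipeq v w; rw [hvw] at this; linarith
  have hnx : ‖x‖ = |e.repr v 0| := by
    rw [@norm_eq_sqrt_real_inner, hxx, ← sq, Real.sqrt_sq_eq_abs]
  have hny : ‖y‖ = |e.repr w 0| := by
    rw [@norm_eq_sqrt_real_inner, hyy, ← sq, Real.sqrt_sq_eq_abs]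
  have heq : ‖(inner ℝ x y : ℝ)‖ = ‖x‖ * ‖y‖ := by
    rw [hxy, hnx, hny, Real.norm_eq_abs, abs_mul]
  obtain ⟨r, hr0, hyx⟩ := (norm_inner_eq_norm_iff hx0 hy0).mp heq
  have hcw0 : e.repr w 0 = r * e.repr v 0 := by
    have h1 : (inner ℝ x y : ℝ) = r * (inner ℝ x x : ℝ) := by
      rw [hyx, real_inner_smul_right]
    rw [hxy, hxx] at h1
    exact mul_left_cancel₀ hv00 (by rw [h1]; ring)
  refine ⟨r, hr0, ?_⟩
  apply e.repr.injective
  rw [map_smul]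
  ext i
  rw [Finsupp.smul_apply, smul_eq_mul]
  by_cases hi : i = 0
  · rw [hi]; exact hcw0
  · have := congrArg (fun z => z i) hyx
    simp only [truncAux, PiLp.toLp_apply, hi, if_false, PiLp.smul_apply, smul_eq_mul, hxdef, hydef] at this ⊢
    simpa [truncAux, hi] using this

/-- With v as in the degenerate situation, v and w are linearly independent and
L = span{v,w} is a Lorentzian plane; in particular ⟨v,w⟩ ≠ 0. -/
theorem stmt_6
    (n p : ℕ) (hn : 1 ≤ n) (hp : 2 ≤ p)
    {V : Type} [AddCommGroup V] [Module ℝ V] [FiniteDimensional ℝ V]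
    (hV : finrank ℝ V = 2 * n)
    (J : V →ₗ[ℝ] V) (hJ : ∀ X, J (J X) = -X)
    {Λ : Type} [AddCommGroup Λ] [Module ℝ Λ] [FiniteDimensional ℝ Λ]
    (hΛ : finrank ℝ Λ = p)
    (ip : LinearMap.BilinForm ℝ Λ) (hipsymm : ∀ ξ η, ip ξ η = ip η ξ)
    (e : Basis (Fin p) ℝ Λ)
    (he : ∀ i j, ip (e i) (e j) =
      if i = j then (if (i : ℕ) = 0 then (-1 : ℝ) else 1) else 0)
    (g : LinearMap.BilinForm ℝ V) (hgsymm : ∀ X Y, g X Y = g Y X)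
    (hgpos : ∀ X : V, X ≠ 0 → 0 < g X X)
    (hgJ : ∀ X Y, g (J X) (J Y) = g X Y)
    (α : V →ₗ[ℝ] V →ₗ[ℝ] Λ) (hαsymm : ∀ X Y, α X Y = α Y X)
    (w : Λ) (hw0 : w ≠ 0) (hww : ip w w = 0)
    (hαw : ∀ X Y, ip (α X Y) w = - g X Y)
    (bW : LinearMap.BilinForm ℝ (Λ × Λ))
    (hbW : ∀ ξ η, bW ξ η = ip ξ.1 η.1 - ip ξ.2 η.2)
    (β : V → V → Λ × Λ)
    (hβ : ∀ X Y, β X Y = (α X Y + α (J X) (J Y), α X (J Y) - α (J X) Y))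
    (hflat : ∀ X Y Z T, bW (β X Y) (β Z T) = bW (β X T) (β Z Y))
    (Sβ : Submodule ℝ (Λ × Λ))
    (hSβ : Sβ = Submodule.span ℝ {z : Λ × Λ | ∃ X Y, z = β X Y})
    (U₀ : Submodule ℝ Λ)
    (hU₀ : U₀ = Submodule.map (LinearMap.fst ℝ Λ Λ) Sβ)
    (v : Λ) (hvU₀ : v ∈ U₀) (hv0 : v ≠ 0) (hvv : ip v v = 0)
    (hrad : Sβ ⊓ bW.orthogonal Sβ =
      Submodule.span ℝ {((v, 0) : Λ × Λ), ((0, v) : Λ × Λ)}) :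
    LinearIndependent ℝ ![v, w] ∧
      (∃ a b : Λ, a ∈ Submodule.span ℝ {v, w} ∧ b ∈ Submodule.span ℝ {v, w} ∧
        ip a a = 1 ∧ ip b b = -1 ∧ ip a b = 0 ∧
        Submodule.span ℝ {a, b} = Submodule.span ℝ {v, w}) ∧
      ip v w ≠ 0 := by
  classical
  haveI hNZ : NeZero p := ⟨by omega⟩
  -- (v,0) is bW-orthogonal to all of Sβ
  have hv0mem : ((v, 0) : Λ × Λ) ∈ bW.orthogonal Sβ := by
    have h1 : ((v, 0) : Λ × Λ) ∈ Sβ ⊓ bW.orthogonal Sβ := by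
      rw [hrad]; exact Submodule.subset_span (by simp)
    exact h1.2
  have hperp : ∀ X : V, ip (α X X + α (J X) (J X)) v = 0 := by
    intro X
    have hmem : β X X ∈ Sβ := by
      rw [hSβ]; exact Submodule.subset_span ⟨X, X, rfl⟩
    have h2 := (LinearMap.BilinForm.mem_orthogonal_iff.mp hv0mem) (β X X) hmem
    rw [hbW, hβ] at h2
    simpa [hipsymm] using h2
  -- the key claim : ip v w ≠ 0
  have hvwne : ip v w ≠ 0 := by
    intro hvw0
    obtain ⟨r, hr0, hwv⟩ := null_orth_dep p ip e he v w hv0 hw0 hvv hww hvw0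
    -- pick a nonzero X in V
    have hpos : 0 < finrank ℝ V := by omega
    haveI : Nontrivial V := Module.nontrivial_of_finrank_pos hpos
    obtain ⟨X, hX⟩ := exists_ne (0 : V)
    have h3 : ip (α X X + α (J X) (J X)) w = 0 := by
      rw [hwv, map_smul, smul_eq_mul, hperp X, mul_zero]
    have h4 : ip (α X X + α (J X) (J X)) w = - g X X - g X X := by
      rw [map_add, LinearMap.add_apply, hαw, hαw, hgJ]; ring
    have := hgpos X hX
    rw [h4] at h3
    linarith
  refine ⟨?_, ?_, hvwne⟩
  · rw [LinearIndependent.pair_iff]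
    intro s t hst
    have h1 : ip v (s • v + t • w) = 0 := by rw [hst]; simp
    rw [map_add, map_smul, map_smul, smul_eq_mul, smul_eq_mul, hvv, mul_zero, zero_add] at h1
    have ht : t = 0 := by
      rcases mul_eq_zero.mp h1 with h | h
      · exact h
      · exact absurd h hvwne
    refine ⟨?_, ht⟩
    rw [ht, zero_smul, add_zero] at hst
    rcases smul_eq_zero.mp hst with h | h
    · exact h
    · exact absurd h hv0
  · set c := ip v w with hc
    have hwvip : ip w v = c := hipsymm w v
    refine ⟨(1/(2*c)) • v + w, (1/(2*c)) • v - w, ?_, ?_, ?_, ?_, ?_, ?_⟩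
    · exact Submodule.add_mem _
        (Submodule.smul_mem _ _ (Submodule.subset_span (by simp)))
        (Submodule.subset_span (by simp))
    · exact Submodule.sub_mem _
        (Submodule.smul_mem _ _ (Submodule.subset_span (by simp)))
        (Submodule.subset_span (by simp))
    · simp only [map_add, map_smul, map_sub, LinearMap.add_apply, LinearMap.sub_apply,
        LinearMap.smul_apply, smul_eq_mul, hvv, hww, hwvip, ← hc]
      field_simp
      ring
    · simp only [map_add, map_smul, map_sub, LinearMap.add_apply, LinearMap.sub_apply,
        LinearMap.smul_apply, smul_eq_mul, hvv, hww, hwvip, ← hc]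
      field_simp
      ring
    · simp only [map_add, map_smul, map_sub, LinearMap.add_apply, LinearMap.sub_apply,
        LinearMap.smul_apply, smul_eq_mul, hvv, hww, hwvip, ← hc]
      ring
    · apply le_antisymm
      · rw [Submodule.span_le, Set.insert_subset_iff, Set.singleton_subset_iff]
        constructor
        · exact Submodule.add_mem _
            (Submodule.smul_mem _ _ (Submodule.subset_span (by simp)))
            (Submodule.subset_span (by simp))
        · exact Submodule.sub_mem _
            (Submodule.smul_mem _ _ (Submodule.subset_span (by simp)))
            (Submodule.subset_span (by simp))
      · rw [Submodule.span_le, Set.insert_subset_iff, Set.singleton_subset_iff]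
        have ha : ((1/(2*c)) • v + w) ∈ Submodule.span ℝ
            ({(1/(2*c)) • v + w, (1/(2*c)) • v - w} : Set Λ) :=
          Submodule.subset_span (by simp)
        have hb : ((1/(2*c)) • v - w) ∈ Submodule.span ℝ
            ({(1/(2*c)) • v + w, (1/(2*c)) • v - w} : Set Λ) :=
          Submodule.subset_span (by simp)
        constructor
        · have hveq : v = c • (((1/(2*c)) • v + w) + ((1/(2*c)) • v - w)) := by
            match_scalars <;> field_simp <;> ring
          have hm := Submodule.smul_mem _ c (Submodule.add_mem _ ha hb)
          rw [← hveq] at hm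
          exact hm
        · have hweq : w = (1/2 : ℝ) • (((1/(2*c)) • v + w) - ((1/(2*c)) • v - w)) := by
            match_scalars <;> field_simp <;> ring
          have hm := Submodule.smul_mem _ (1/2 : ℝ) (Submodule.sub_mem _ ha hb)
          rw [← hweq] at hm
          exact hm
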